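/- Let K be a compact Hausdorff space, φ : K → K an open continuous surjection, w ∈ C(K) with |w| > 0, T = wT_φ, and suppose 1 ∈ σ(T) with 1 ∉ σ_ap(T*). Let G ⊆ K be a closed φ-invariant set on which φ restricts to a homeomorphism and on which the restricted operator T_G is invertible with ρ(T_G^{−1}) < 1. Then there exists n₀ such that for all n ≥ n₀ and all k ∈ G, |w_{n+1}(k)| > 2; in particular the set Q_n = {k ∈ K : |w_{n+1}(k)| > 2} is an open neighborhood of G for all n ≥ n₀. -/

import Mathlib

open Filter Topology

/-- With `φ` an open continuous surjection, `|w| > 0`, `1 ∈ σ(T)` and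
`1 ∉ σ_ap(T*)`, if `G` is a closed `φ`-invariant set on which `φ` is injective and the induced
operator `T_G` is invertible with `ρ(T_G⁻¹) < 1`, then for all sufficiently large `n` the cocycle
satisfies `|w_{n+1}| > 2` on `G`; in particular `Q_n = {k : |w_{n+1}(k)| > 2}` is an open
neighbourhood of `G`. -/
theorem stmt15 {K : Type*} [TopologicalSpace K] [CompactSpace K] [T2Space K]
    (φ : K → K) (hφc : Continuous φ) (hφo : IsOpenMap φ) (hφs : Function.Surjective φ)
    (w : C(K, ℂ)) (hw : ∀ k, w k ≠ 0)
    (T : C(K, ℂ) →L[ℂ] C(K, ℂ))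
    (hT : ∀ f : C(K, ℂ), ∀ k : K, T f k = w k * f (φ k))
    (h1 : (1 : ℂ) ∈ spectrum ℂ T)
    (hap : ¬ ∃ μ : ℕ → StrongDual ℂ C(K, ℂ),
        (∀ n, ‖μ n‖ = 1) ∧
        Tendsto (fun n => ‖(μ n).comp T - μ n‖) atTop (nhds 0))
    (G : Set K) [CompactSpace G] (hGclosed : IsClosed G) (hGinv : φ '' G = G)
    (hGinj : Set.InjOn φ G) (hmemG : ∀ x ∈ G, φ x ∈ G)
    (TG SG : C(G, ℂ) →L[ℂ] C(G, ℂ))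
    (hTG : ∀ f : C(G, ℂ), ∀ x : G, TG f x = w x * f ⟨φ x, hmemG x x.2⟩)
    (hinv₁ : TG.comp SG = 1) (hinv₂ : SG.comp TG = 1)
    (hρ : spectralRadius ℂ SG < 1) :
    ∃ n₀ : ℕ, ∀ n : ℕ, n₀ ≤ n →
      (∀ k ∈ G, 2 < ‖∏ i ∈ Finset.range (n + 1), w (φ^[i] k)‖) ∧
      G ⊆ {k : K | 2 < ‖∏ i ∈ Finset.range (n + 1), w (φ^[i] k)‖} ∧
      IsOpen {k : K | 2 < ‖∏ i ∈ Finset.range (n + 1), w (φ^[i] k)‖} := by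
  -- the induced self-map of G
  set φG : G → G := fun x => ⟨φ x, hmemG x x.2⟩ with hφG
  have hiter : ∀ (m : ℕ) (x : G), ((φG^[m] x : G) : K) = φ^[m] (x : K) := by
    intro m
    induction m with
    | zero => intro x; simp
    | succ m ih =>
      intro x
      rw [Function.iterate_succ_apply, Function.iterate_succ_apply, ih]
  -- the pointwise formula for powers of TG
  have hpow : ∀ (m : ℕ) (f : C(G, ℂ)) (x : G),
      (TG ^ m) f x = (∏ i ∈ Finset.range m, w (φ^[i] (x : K))) * f (φG^[m] x) := by
    intro m
    induction m with
    | zero => intro f x; simp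
    | succ m ih =>
      intro f x
      rw [pow_succ', ContinuousLinearMap.mul_def, ContinuousLinearMap.comp_apply,
        hTG, ih]
      rw [Finset.prod_range_succ']
      have h1 : ∀ i : ℕ, φ^[i] ((φG x : G) : K) = φ^[i + 1] (x : K) := by
        intro i; rw [Function.iterate_succ_apply]
      have h2 : φG^[m] (φG x) = φG^[m + 1] x := by
        rw [Function.iterate_succ_apply]
      simp only [h1, h2, Function.iterate_zero_apply]
      simp only [Function.iterate_succ_apply]
      rw [show φG^[m] (φG x) = φG^[m] ⟨φ x, hmemG x x.2⟩ from rfl]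
      ring
  -- powers of TG are left-inverted by powers of SG
  have hTS : ∀ m : ℕ, (TG ^ m) * (SG ^ m) = 1 := by
    intro m
    induction m with
    | zero => simp
    | succ m ih =>
      have h1 : TG * SG = 1 := hinv₁
      calc TG ^ (m + 1) * SG ^ (m + 1) = TG * ((TG ^ m * SG ^ m) * SG) := by
            rw [pow_succ', pow_succ]; simp [mul_assoc]
        _ = 1 := by rw [ih, one_mul, h1]
  -- pointwise lower bound on the cocycle
  have key : ∀ (m : ℕ) (x : G),
      (1 : ℝ) ≤ ‖∏ i ∈ Finset.range m, w (φ^[i] (x : K))‖ * ‖SG ^ m‖ := by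
    intro m x
    have hone : ((TG ^ m) ((SG ^ m) 1)) x = (1 : C(G, ℂ)) x := by
      have := hTS m
      rw [ContinuousLinearMap.mul_def] at this
      rw [← ContinuousLinearMap.comp_apply, this]
      simp
    rw [hpow] at hone
    have hx : Nonempty G := ⟨x⟩
    have h1x : ((1 : C(G, ℂ)) x : ℂ) = 1 := rfl
    rw [h1x] at hone
    calc (1 : ℝ) = ‖(∏ i ∈ Finset.range m, w (φ^[i] (x : K))) *
          ((SG ^ m) 1) (φG^[m] x)‖ := by rw [hone]; simp
      _ = ‖∏ i ∈ Finset.range m, w (φ^[i] (x : K))‖ * ‖((SG ^ m) 1) (φG^[m] x)‖ := by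
          rw [norm_mul]
      _ ≤ ‖∏ i ∈ Finset.range m, w (φ^[i] (x : K))‖ * ‖SG ^ m‖ := by
          gcongr
          calc ‖((SG ^ m) 1) (φG^[m] x)‖ ≤ ‖(SG ^ m) 1‖ :=
                ContinuousMap.norm_coe_le_norm _ _
            _ ≤ ‖SG ^ m‖ * ‖(1 : C(G, ℂ))‖ := (SG ^ m).le_opNorm 1
            _ = ‖SG ^ m‖ := by rw [norm_one, mul_one]
  -- eventual smallness of ‖SG ^ m‖
  obtain ⟨c, hc1, hc2⟩ := exists_between hρ
  have hcne : c ≠ ⊤ := ne_top_of_lt hc2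
  set r : NNReal := c.toNNReal with hr
  have hrc : (r : ENNReal) = c := ENNReal.coe_toNNReal hcne
  have hrlt : (r : ℝ) < 1 := by
    have := hc2
    rw [← hrc] at this
    exact_mod_cast this
  have hGel := spectrum.pow_nnnorm_pow_one_div_tendsto_nhds_spectralRadius SG
  have hev1 : ∀ᶠ m : ℕ in atTop, ((‖SG ^ m‖₊ : ENNReal)) ^ (1 / (m : ℝ)) < c :=
    hGel.eventually_lt_const hc1
  have hev2 : ∀ᶠ m : ℕ in atTop, (r : ℝ) ^ m < 1 / 2 := by
    have h0 : Tendsto (fun m : ℕ => (r : ℝ) ^ m) atTop (𝓝 0) :=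
      tendsto_pow_atTop_nhds_zero_of_lt_one r.coe_nonneg hrlt
    exact h0.eventually_lt_const (by norm_num)
  have hev : ∀ᶠ m : ℕ in atTop, ‖SG ^ m‖ < 1 / 2 := by
    filter_upwards [hev1, hev2, eventually_ge_atTop 1] with m h1m h2m h3m
    have hm0 : (m : ℝ) ≠ 0 := Nat.cast_ne_zero.mpr (by omega)
    have hle : (‖SG ^ m‖₊ : ENNReal) ≤ c ^ m := by
      have := ENNReal.rpow_le_rpow h1m.le (Nat.cast_nonneg m)
      rwa [← ENNReal.rpow_mul, one_div, inv_mul_cancel₀ hm0, ENNReal.rpow_one,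
        ENNReal.rpow_natCast] at this
    rw [← hrc, ← ENNReal.coe_pow, ENNReal.coe_le_coe] at hle
    have hle' : ‖SG ^ m‖ ≤ (r : ℝ) ^ m := by
      have := (NNReal.coe_le_coe).mpr hle
      rwa [NNReal.coe_pow] at this
    linarith
  obtain ⟨N, hN⟩ := eventually_atTop.mp hev
  refine ⟨N, fun n hn => ?_⟩
  have hSn : ‖SG ^ (n + 1)‖ < 1 / 2 := hN (n + 1) (by omega)
  have hmain : ∀ k ∈ G, 2 < ‖∏ i ∈ Finset.range (n + 1), w (φ^[i] k)‖ := by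
    intro k hk
    have hkey : (1 : ℝ) ≤ ‖∏ i ∈ Finset.range (n + 1), w (φ^[i] k)‖ * ‖SG ^ (n + 1)‖ :=
      key (n + 1) ⟨k, hk⟩
    have hS0 : 0 ≤ ‖SG ^ (n + 1)‖ := norm_nonneg _
    by_contra hcon
    push_neg at hcon
    have h2 : ‖∏ i ∈ Finset.range (n + 1), w (φ^[i] k)‖ * ‖SG ^ (n + 1)‖ ≤
        2 * ‖SG ^ (n + 1)‖ := mul_le_mul_of_nonneg_right hcon hS0
    linarith
  refine ⟨hmain, fun k hk => hmain k hk, ?_⟩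
  have hcont : Continuous fun k : K => ‖∏ i ∈ Finset.range (n + 1), w (φ^[i] k)‖ := by
    apply Continuous.norm
    apply continuous_finset_prod
    intro i _
    exact w.continuous.comp (hφc.iterate i)
  exact isOpen_lt continuous_const hcont
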